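/- Let c₁, c₂, c₃ ∈ ℝ with c₁c₃ - c₂² ≠ 0, and set c = c₂/(c₁c₃ - c₂²). The lattice equation with polynomial E(w,x,y,z) = wy + c₁wx + c₃yz + c₂(wz + xy), i.e. u_{n,m}u_{n,m+1} + c₁u_{n,m}u_{n+1,m} + c₃u_{n,m+1}u_{n+1,m+1} + c₂(u_{n,m}u_{n+1,m+1} + u_{n+1,m}u_{n,m+1}) = 0, admits the five-point generalized symmetry with generator g_{n,m} = (u_{n+1,m} - c·u_{n,m})(u_{n,m}/u_{n-1,m} - c): for every solution u : ℤ × ℤ → ℝ of the equation satisfying u_{n,m} ≠ 0 for all (n,m), and every (n,m) ∈ ℤ², the linearized equation g_{n,m}·∂₁E + g_{n+1,m}·∂₂E + g_{n,m+1}·∂₃E + g_{n+1,m+1}·∂₄E = 0 holds, where each ∂ᵢE is evaluated at (u_{n,m}, u_{n+1,m}, u_{n,m+1}, u_{n+1,m+1}). -/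

import Mathlib

set_option maxRecDepth 100000 in
set_option maxHeartbeats 2000000 in

theorem stmt_10
    (c₁ c₂ c₃ : ℝ) (h : c₁ * c₃ - c₂ ^ 2 ≠ 0) (c : ℝ) (hc : c = c₂ / (c₁ * c₃ - c₂ ^ 2))
    (E : ℝ → ℝ → ℝ → ℝ → ℝ)
    (hE : ∀ w x y z : ℝ, E w x y z = w * y + c₁ * (w * x) + c₃ * (y * z) + c₂ * (w * z + x * y))
    (u : ℤ × ℤ → ℝ)
    (hu : ∀ n m : ℤ, E (u (n, m)) (u (n + 1, m)) (u (n, m + 1)) (u (n + 1, m + 1)) = 0)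
    (hne : ∀ n m : ℤ, u (n, m) ≠ 0)
    (g : ℤ × ℤ → ℝ)
    (hg : ∀ n m : ℤ, g (n, m) = (u (n + 1, m) - c * u (n, m)) * (u (n, m) / u (n - 1, m) - c))
    (n m : ℤ) :
    g (n, m) * deriv (fun w => E w (u (n + 1, m)) (u (n, m + 1)) (u (n + 1, m + 1))) (u (n, m))
      + g (n + 1, m) * deriv (fun x => E (u (n, m)) x (u (n, m + 1)) (u (n + 1, m + 1))) (u (n + 1, m))
      + g (n, m + 1) * deriv (fun y => E (u (n, m)) (u (n + 1, m)) y (u (n + 1, m + 1))) (u (n, m + 1))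
      + g (n + 1, m + 1) * deriv (fun z => E (u (n, m)) (u (n + 1, m)) (u (n, m + 1)) z) (u (n + 1, m + 1)) = 0 := by
  have hD1 : ∀ x y z W : ℝ, deriv (fun w => E w x y z) W = y + c₁ * x + c₂ * z := fun x y z W => by
    have hf : (fun w => E w x y z) = fun w => (y + c₁ * x + c₂ * z) * w + (c₃ * (y * z) + c₂ * (x * y)) :=
      funext fun w => by rw [hE]; ring
    rw [hf, deriv_add_const, deriv_const_mul_field, deriv_id'']; ring
  have hD2 : ∀ w y z X : ℝ, deriv (fun x => E w x y z) X = c₁ * w + c₂ * y := fun w y z X => by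
    have hf : (fun x => E w x y z) = fun x => (c₁ * w + c₂ * y) * x + (w * y + c₃ * (y * z) + c₂ * (w * z)) :=
      funext fun x => by rw [hE]; ring
    rw [hf, deriv_add_const, deriv_const_mul_field, deriv_id'']; ring
  have hD3 : ∀ w x z Y : ℝ, deriv (fun y => E w x y z) Y = w + c₃ * z + c₂ * x := fun w x z Y => by
    have hf : (fun y => E w x y z) = fun y => (w + c₃ * z + c₂ * x) * y + (c₁ * (w * x) + c₂ * (w * z)) :=
      funext fun y => by rw [hE]; ring
    rw [hf, deriv_add_const, deriv_const_mul_field, deriv_id'']; ring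
  have hD4 : ∀ w x y Z : ℝ, deriv (fun z => E w x y z) Z = c₃ * y + c₂ * w := fun w x y Z => by
    have hf : (fun z => E w x y z) = fun z => (c₃ * y + c₂ * w) * z + (w * y + c₁ * (w * x) + c₂ * (x * y)) :=
      funext fun z => by rw [hE]; ring
    rw [hf, deriv_add_const, deriv_const_mul_field, deriv_id'']; ring
  have idx1 : (n + 1 - 1 : ℤ) = n := by ring
  have idx2 : (n - 1 + 1 : ℤ) = n := by ring
  -- equation instances
  have heq1 := hu (n - 1) m
  have heq2 := hu n m
  have heq3 := hu (n + 1) m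
  rw [hE, idx2] at heq1
  rw [hE] at heq2
  rw [hE] at heq3
  -- symmetry generator instances
  have hg1 := hg n m
  have hg2 := hg (n + 1) m
  have hg3 := hg n (m + 1)
  have hg4 := hg (n + 1) (m + 1)
  rw [idx1] at hg2 hg4
  rw [hD1, hD2, hD3, hD4, hg1, hg2, hg3, hg4, hc]
  have ha := hne (n - 1) m
  have hb := hne n m
  have ha1 := hne (n - 1) (m + 1)
  have hb1 := hne n (m + 1)
  field_simp
  linear_combination
    (c₁ * c₃ - c₂ ^ 2) ^ 0 * (u (n, m + 1) * u (n + 1, m + 1) ^ 3 * c₂ ^ 3 * c₃ ^ 2 + (2) * u (n, m + 1) * u (n + 1, m + 1) ^ 3 * c₁ * c₂ * c₃ ^ 3 + (3) * u (n, m + 1) ^ 2 * u (n + 1, m + 1) ^ 2 * c₂ ^ 2 * c₃ ^ 2 + u (n, m + 1) ^ 2 * u (n + 1, m + 1) ^ 2 * c₁ * c₃ ^ 3 + (3) * u (n, m + 1) ^ 3 * u (n + 1, m + 1) * c₂ * c₃ ^ 2 + (2) * u (n + 1, m) * u (n, m + 1) * u (n + 1, m + 1) ^ 2 * c₁ * c₂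 ^ 2 * c₃ ^ 2 + (-1) * u (n + 1, m) * u (n, m + 1) * u (n + 1, m + 1) ^ 2 * c₁ ^ 2 * c₃ ^ 3 + (2) * u (n + 1, m) * u (n, m + 1) ^ 2 * u (n + 1, m + 1) * c₂ ^ 3 * c₃ + (-1) * u (n + 1, m) * u (n, m + 1) ^ 2 * u (n + 1, m + 1) * c₁ * c₂ * c₃ ^ 2 + (3) * u (n + 1, m) * u (n, m + 1) ^ 3 * c₂ ^ 2 * c₃ + (-1) * u (n + 1, m) ^ 2 * u (n, m + 1) * u (n + 1, m + 1) * c₂ ^ 5 + u (n + 1, m) ^ 2 * u (n, m + 1) * u (n + 1, m + 1) * c₁ ^ 2 * c₂ * c₃ ^ 2 + (-1) * u (n + 1, m) ^ 2 * u (n, m + 1) ^ 2 * c₂ ^ 4 + (-2) * u (n + 1, m) ^ 2 * u (n, m + 1) ^ 2 * c₁ * c₂ ^ 2 * c₃ + (2) * u (n + 1, m) ^ 3 * u (n, m + 1) * c₁ ^ 2 * c₂ ^ 2 * c₃ + u (n, m) * u (n + 1, m + 1) ^ 3 * c₂ ^ 4 * c₃ + (2) * u (n, m) * u (n + 1, m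 + 1) ^ 3 * c₁ * c₂ ^ 2 * c₃ ^ 2 + (5) * u (n, m) * u (n, m + 1) * u (n + 1, m + 1) ^ 2 * c₂ ^ 3 * c₃ + u (n, m) * u (n, m + 1) * u (n + 1, m + 1) ^ 2 * c₁ * c₂ * c₃ ^ 2 + (6) * u (n, m) * u (n, m + 1) ^ 2 * u (n + 1, m + 1) * c₂ ^ 2 * c₃ + (3) * u (n, m) * u (n, m + 1) ^ 3 * c₂ * c₃ + (-1) * u (n, m) * u (n + 1, m) * u (n + 1, m + 1) ^ 2 * c₂ ^ 5 + u (n, m) * u (n + 1, m) * u (n + 1, m + 1) ^ 2 * c₁ * c₂ ^ 3 * c₃ + u (n, m) * u (n + 1, m) * u (n + 1, m + 1) ^ 2 * c₁ ^ 2 * c₂ * c₃ ^ 2 + (-1) * u (n, m) * u (n + 1, m) * u (n, m + 1) * u (n + 1, m + 1) * c₂ ^ 4 + (-1) * u (n, m) * u (n + 1, m) * u (n, m + 1) ^ 2 * c₂ ^ 3 + (-1) * u (n, m) * u (n + 1, m) ^ 2 * u (n + 1, m + 1) * c₁ * c₂ ^ 4 + (2) * u (n, m) * u (n + 1, m) ^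 2 * u (n + 1, m + 1) * c₁ ^ 2 * c₂ ^ 2 * c₃ + (-1) * u (n, m) * u (n + 1, m) ^ 2 * u (n + 1, m + 1) * c₁ ^ 3 * c₃ ^ 2 + (2) * u (n, m) * u (n + 1, m) ^ 3 * c₁ ^ 3 * c₂ * c₃ + (-1) * u (n, m) ^ 2 * u (n + 1, m + 1) ^ 2 * c₁ * c₂ ^ 2 * c₃ + (-2) * u (n, m) ^ 2 * u (n, m + 1) * u (n + 1, m + 1) * c₁ * c₂ * c₃ + (-1) * u (n, m) ^ 2 * u (n, m + 1) ^ 2 * c₁ * c₃ + u (n, m) ^ 2 * u (n + 1, m) ^ 2 * c₁ ^ 3 * c₃) * heq1 +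
    (c₁ * c₃ - c₂ ^ 2) ^ 0 * ((-1) * u (n - 1, m + 1) * u (n, m + 1) * u (n + 1, m + 1) ^ 2 * c₂ ^ 3 * c₃ ^ 2 + (-2) * u (n - 1, m + 1) * u (n, m + 1) * u (n + 1, m + 1) ^ 2 * c₁ * c₂ * c₃ ^ 3 + (-3) * u (n - 1, m + 1) * u (n, m + 1) ^ 2 * u (n + 1, m + 1) * c₂ ^ 2 * c₃ ^ 2 + (-1) * u (n - 1, m + 1) * u (n, m + 1) ^ 2 * u (n + 1, m + 1) * c₁ * c₃ ^ 3 + (-3) * u (n - 1, m + 1) * u (n, m + 1) ^ 3 * c₂ * c₃ ^ 2 + u (n + 1, m) * u (n - 1, m + 1) * u (n, m + 1) * u (n + 1, m + 1) * c₂ ^ 4 * c₃ + u (n + 1, m) * u (n - 1, m + 1) * u (n, m + 1) * u (n + 1, m + 1) * c₁ ^ 2 * c₃ ^ 3 + u (n + 1, m) * u (n - 1, m + 1) * u (n, m + 1) ^ 2 * c₂ ^ 3 * c₃ + (2) * u (n + 1, m) * u (n - 1, m + 1) * u (n, m + 1) ^ 2 * c₁ * c₂ * c₃ ^ 2 + (-2)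 * u (n + 1, m) ^ 2 * u (n - 1, m + 1) * u (n, m + 1) * c₁ ^ 2 * c₂ * c₃ ^ 2 + (-1) * u (n, m) * u (n - 1, m + 1) * u (n + 1, m + 1) ^ 2 * c₂ ^ 4 * c₃ + (-2) * u (n, m) * u (n - 1, m + 1) * u (n + 1, m + 1) ^ 2 * c₁ * c₂ ^ 2 * c₃ ^ 2 + (-4) * u (n, m) * u (n - 1, m + 1) * u (n, m + 1) * u (n + 1, m + 1) * c₂ ^ 3 * c₃ + u (n, m) * u (n - 1, m + 1) * u (n, m + 1) * u (n + 1, m + 1) * c₁ * c₂ * c₃ ^ 2 + (-3) * u (n, m) * u (n - 1, m + 1) * u (n, m + 1) ^ 2 * c₂ ^ 2 * c₃ + u (n, m) * u (n - 1, m + 1) * u (n, m + 1) ^ 2 * c₁ * c₃ ^ 2 + u (n, m) * u (n + 1, m) * u (n - 1, m + 1) * u (n + 1, m + 1) * c₂ ^ 5 + u (n, m) * u (n + 1, m) * u (n - 1, m + 1) * u (n + 1, m + 1) * c₁ ^ 2 * c₂ * c₃ ^ 2 + u (n, m) * u (n + 1, m) * u (n - 1, m + 1) * u (n, m + 1) *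 c₂ ^ 4 + u (n, m) * u (n + 1, m) * u (n - 1, m + 1) * u (n, m + 1) * c₁ * c₂ ^ 2 * c₃ + (-2) * u (n, m) * u (n + 1, m) ^ 2 * u (n - 1, m + 1) * c₁ ^ 2 * c₂ ^ 2 * c₃ + u (n, m) ^ 2 * u (n - 1, m + 1) * u (n + 1, m + 1) * c₁ * c₂ ^ 2 * c₃ + u (n, m) ^ 2 * u (n - 1, m + 1) * u (n, m + 1) * c₂ ^ 3 + (-1) * u (n, m) ^ 2 * u (n + 1, m) * u (n - 1, m + 1) * c₁ ^ 2 * c₂ * c₃ + (-1) * u (n - 1, m) * u (n, m + 1) * u (n + 1, m + 1) ^ 2 * c₂ ^ 4 * c₃ + (-2) * u (n - 1, m) * u (n, m + 1) * u (n + 1, m + 1) ^ 2 * c₁ * c₂ ^ 2 * c₃ ^ 2 + (-3) * u (n - 1, m) * u (n, m + 1) ^ 2 * u (n + 1, m + 1) * c₂ ^ 3 * c₃ + (-1) * u (n - 1, m) * u (n, m + 1) ^ 2 * u (n + 1, m + 1) * c₁ * c₂ * c₃ ^ 2 + (-3) * u (n - 1, m) * u (n, m + 1) ^ 3 * c₂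 ^ 2 * c₃ + (-1) * u (n - 1, m) * u (n - 1, m + 1) * u (n + 1, m + 1) * u (n + 1 + 1, m + 1) * c₂ ^ 4 * c₃ + u (n - 1, m) * u (n - 1, m + 1) * u (n + 1, m + 1) * u (n + 1 + 1, m + 1) * c₁ ^ 2 * c₃ ^ 3 + (-1) * u (n - 1, m) * u (n - 1, m + 1) * u (n + 1, m + 1) ^ 2 * c₂ ^ 3 * c₃ + (-2) * u (n - 1, m) * u (n - 1, m + 1) * u (n + 1, m + 1) ^ 2 * c₁ * c₂ * c₃ ^ 2 + u (n - 1, m) * u (n - 1, m + 1) * u (n, m + 1) * u (n + 1 + 1, m + 1) * c₂ ^ 3 * c₃ + (-1) * u (n - 1, m) * u (n - 1, m + 1) * u (n, m + 1) * u (n + 1 + 1, m + 1) * c₁ * c₂ * c₃ ^ 2 + (-3) * u (n - 1, m) * u (n - 1, m + 1) * u (n, m + 1) * u (n + 1, m + 1) * c₂ ^ 2 * c₃ + (-1) * u (n - 1, m) * u (n - 1, m + 1) * u (n, m + 1) * u (n + 1, m + 1) * c₁ * c₃ ^ 2 + (-3) * u (n - 1, m) * u (n - 1, m + 1) * u (n,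 m + 1) ^ 2 * c₂ * c₃ + (-1) * u (n - 1, m) * u (n + 1 + 1, m) * u (n - 1, m + 1) * u (n + 1, m + 1) * c₂ ^ 5 + u (n - 1, m) * u (n + 1 + 1, m) * u (n - 1, m + 1) * u (n + 1, m + 1) * c₁ ^ 2 * c₂ * c₃ ^ 2 + u (n - 1, m) * u (n + 1 + 1, m) * u (n - 1, m + 1) * u (n, m + 1) * c₂ ^ 4 + (-1) * u (n - 1, m) * u (n + 1 + 1, m) * u (n - 1, m + 1) * u (n, m + 1) * c₁ * c₂ ^ 2 * c₃ + u (n - 1, m) * u (n + 1, m) * u (n, m + 1) * u (n + 1, m + 1) * c₂ ^ 5 + u (n - 1, m) * u (n + 1, m) * u (n, m + 1) * u (n + 1, m + 1) * c₁ ^ 2 * c₂ * c₃ ^ 2 + u (n - 1, m) * u (n + 1, m) * u (n, m + 1) ^ 2 * c₂ ^ 4 + (2) * u (n - 1, m) * u (n + 1, m) * u (n, m + 1) ^ 2 * c₁ * c₂ ^ 2 * c₃ + (-1) * u (n - 1, m) * u (n + 1, m) * u (n - 1, m + 1) * u (n + 1 + 1, m + 1) * c₂ ^ 5 + u (n - 1,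 m) * u (n + 1, m) * u (n - 1, m + 1) * u (n + 1 + 1, m + 1) * c₁ ^ 2 * c₂ * c₃ ^ 2 + (2) * u (n - 1, m) * u (n + 1, m) * u (n - 1, m + 1) * u (n + 1, m + 1) * c₁ ^ 2 * c₃ ^ 2 + (2) * u (n - 1, m) * u (n + 1, m) * u (n - 1, m + 1) * u (n, m + 1) * c₂ ^ 3 + u (n - 1, m) * u (n + 1, m) * u (n - 1, m + 1) * u (n, m + 1) * c₁ * c₂ * c₃ + (-1) * u (n - 1, m) * u (n + 1, m) * u (n + 1 + 1, m) * u (n - 1, m + 1) * c₁ * c₂ ^ 4 + u (n - 1, m) * u (n + 1, m) * u (n + 1 + 1, m) * u (n - 1, m + 1) * c₁ ^ 3 * c₃ ^ 2 + (-2) * u (n - 1, m) * u (n + 1, m) ^ 2 * u (n, m + 1) * c₁ ^ 2 * c₂ ^ 2 * c₃ + (-2) * u (n - 1, m) * u (n + 1, m) ^ 2 * u (n - 1, m + 1) * c₁ ^ 2 * c₂ * c₃ + (-1) * u (n - 1, m) * u (n, m) * u (n + 1, m + 1) ^ 2 * c₁ * c₂ ^ 3 * c₃ + (-2) * u (n -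 1, m) * u (n, m) * u (n + 1, m + 1) ^ 2 * c₁ ^ 2 * c₂ * c₃ ^ 2 + (-3) * u (n - 1, m) * u (n, m) * u (n, m + 1) * u (n + 1, m + 1) * c₁ * c₂ ^ 2 * c₃ + u (n - 1, m) * u (n, m) * u (n, m + 1) ^ 2 * c₂ ^ 3 + (-3) * u (n - 1, m) * u (n, m) * u (n, m + 1) ^ 2 * c₁ * c₂ * c₃ + u (n - 1, m) * u (n, m) * u (n - 1, m + 1) * u (n + 1 + 1, m + 1) * c₂ ^ 4 + (-1) * u (n - 1, m) * u (n, m) * u (n - 1, m + 1) * u (n + 1 + 1, m + 1) * c₁ * c₂ ^ 2 * c₃ + u (n - 1, m) * u (n, m) * u (n - 1, m + 1) * u (n + 1, m + 1) * c₂ ^ 3 + (2) * u (n - 1, m) * u (n, m) * u (n - 1, m + 1) * u (n, m + 1) * c₂ ^ 2 + u (n - 1, m) * u (n, m) * u (n - 1, m + 1) * u (n, m + 1) * c₁ * c₃ + u (n - 1, m) * u (n, m) * u (n + 1 + 1, m) * u (n - 1, m + 1) * c₁ * c₂ ^ 3 + (-1) * u (n - 1, m) * u (n, m) * u (n + 1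 + 1, m) * u (n - 1, m + 1) * c₁ ^ 2 * c₂ * c₃ + u (n - 1, m) * u (n, m) * u (n + 1, m) * u (n + 1, m + 1) * c₁ * c₂ ^ 4 + u (n - 1, m) * u (n, m) * u (n + 1, m) * u (n + 1, m + 1) * c₁ ^ 3 * c₃ ^ 2 + (2) * u (n - 1, m) * u (n, m) * u (n + 1, m) * u (n, m + 1) * c₁ ^ 2 * c₂ * c₃ + (-1) * u (n - 1, m) * u (n, m) * u (n + 1, m) * u (n - 1, m + 1) * c₁ ^ 2 * c₃ + (-2) * u (n - 1, m) * u (n, m) * u (n + 1, m) ^ 2 * c₁ ^ 3 * c₂ * c₃ + u (n - 1, m) * u (n, m) ^ 2 * u (n + 1, m + 1) * c₁ ^ 2 * c₂ * c₃ + u (n - 1, m) * u (n, m) ^ 2 * u (n, m + 1) * c₁ ^ 2 * c₃ + (-1) * u (n - 1, m) * u (n, m) ^ 2 * u (n + 1, m) * c₁ ^ 3 * c₃) * heq2 +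
    (c₁ * c₃ - c₂ ^ 2) ^ 0 * (u (n - 1, m) * u (n - 1, m + 1) * u (n, m + 1) * u (n + 1, m + 1) * c₂ ^ 4 * c₃ + (-1) * u (n - 1, m) * u (n - 1, m + 1) * u (n, m + 1) * u (n + 1, m + 1) * c₁ ^ 2 * c₃ ^ 3 + (-1) * u (n - 1, m) * u (n - 1, m + 1) * u (n, m + 1) ^ 2 * c₂ ^ 3 * c₃ + u (n - 1, m) * u (n - 1, m + 1) * u (n, m + 1) ^ 2 * c₁ * c₂ * c₃ ^ 2 + u (n - 1, m) * u (n + 1, m) * u (n - 1, m + 1) * u (n, m + 1) * c₂ ^ 5 + (-1) * u (n - 1, m) * u (n + 1, m) * u (n - 1, m + 1) * u (n, m + 1) * c₁ ^ 2 * c₂ * c₃ ^ 2 + u (n - 1, m) * u (n, m) * u (n - 1, m + 1) * u (n + 1, m + 1) * c₂ ^ 5 + (-1) * u (n - 1, m) * u (n, m) * u (n - 1, m + 1) * u (n + 1, m + 1) * c₁ ^ 2 * c₂ * c₃ ^ 2 + u (n - 1, m) * u (n, m) * u (n + 1, m) * u (n - 1, m + 1) * c₁ * c₂ ^ 4 +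 (-1) * u (n - 1, m) * u (n, m) * u (n + 1, m) * u (n - 1, m + 1) * c₁ ^ 3 * c₃ ^ 2 + (-1) * u (n - 1, m) * u (n, m) ^ 2 * u (n - 1, m + 1) * c₁ * c₂ ^ 3 + u (n - 1, m) * u (n, m) ^ 2 * u (n - 1, m + 1) * c₁ ^ 2 * c₂ * c₃) * heq3
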